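/- arXiv:2312.14881 — 2 statements merged into one kernel-verified Lean document; each statement's English description precedes it below -/
import Mathlib

section
/- For any graph G and any integer k ≥ 3, if H is the cycle C_k on k vertices, then μ_int(G ⊙ H) ≤ max{2, μ_int(G)}. -/
/-- An (improper) interval edge coloring: for every vertex, the set of colors on
incident edges forms an interval of consecutive integers. -/
def IsIntervalColoring {V : Type*} (G : SimpleGraph V) (c : Sym2 V → ℤ) : Prop :=
  ∀ v : V, ∀ a b x : ℤ,
    (∃ u, G.Adj v u ∧ c s(v, u) = a) → (∃ u, G.Adj v u ∧ c s(v, u) = b) →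
    a ≤ x → x ≤ b → ∃ u, G.Adj v u ∧ c s(v, u) = x

/-- A coloring is `k`-improper if at every vertex each color appears on at most
`k` incident edges. -/
def IsKImproper {V : Type*} (G : SimpleGraph V) (c : Sym2 V → ℤ) (k : ℕ) : Prop :=
  ∀ v : V, ∀ q : ℤ, ({u : V | G.Adj v u ∧ c s(v, u) = q}).ncard ≤ k

/-- The interval coloring impropriety `μ_int(G)`: the least `k` such that `G`
admits a `k`-improper interval edge coloring. -/
noncomputable def impropriety {V : Type*} (G : SimpleGraph V) : ℕ :=
  sInf {k : ℕ | ∃ c : Sym2 V → ℤ, IsIntervalColoring G c ∧ IsKImproper G c k}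

/-- The maximum degree of a graph. -/
noncomputable def maxDeg {V : Type*} (G : SimpleGraph V) : ℕ :=
  sSup {d : ℕ | ∃ v : V, (G.neighborSet v).ncard = d}

/-- The corona product `G ⊙ H`: take `G` and one copy of `H` for every vertex
of `G`, joining each vertex `v` of `G` to all vertices of its copy of `H`. -/
def corona {V W : Type*} (G : SimpleGraph V) (H : SimpleGraph W) :
    SimpleGraph (V ⊕ V × W) where
  Adj x y :=
    match x, y with
    | Sum.inl u, Sum.inl v => G.Adj u v
    | Sum.inl u, Sum.inr p => u = p.1
    | Sum.inr p, Sum.inl u => u = p.1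
    | Sum.inr p, Sum.inr q => p.1 = q.1 ∧ H.Adj p.2 q.2
  symm := by
    refine ⟨?_⟩
    rintro (u | p) (v | q) h
    · exact h.symm
    · exact h
    · exact h
    · exact ⟨h.1.symm, h.2.symm⟩
  loopless := by
    refine ⟨?_⟩
    rintro (u | p) h
    · exact G.irrefl h
    · exact H.irrefl h.2

namespace Stmt13Aux

/-- depth of a cycle vertex (index `a` out of `k`): min distance to index 0. -/
def ddN (k a : ℕ) : ℤ := min (a : ℤ) ((k : ℤ) - (a : ℤ))

/-- color offset for a cycle edge between indices `a` and `b` (symmetric). -/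
def DDN (k a b : ℕ) : ℤ :=
  if a < b then
    (if a = 0 ∧ b = k - 1 then 0 else if ddN k a = ddN k b then ddN k b - 1 else ddN k b)
  else
    (if b = 0 ∧ a = k - 1 then 0 else if ddN k b = ddN k a then ddN k a - 1 else ddN k a)

lemma DDN_symm (k a b : ℕ) : DDN k a b = DDN k b a := by
  unfold DDN
  rcases lt_trichotomy a b with h | h | h
  · rw [if_pos h, if_neg (Nat.lt_asymm h)]
  · subst h; rfl
  · rw [if_neg (Nat.lt_asymm h), if_pos h]

lemma ddN_nonneg (k a : ℕ) (h : a < k) : 0 ≤ ddN k a := by unfold ddN; omega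

lemma two_ddN_le (k a : ℕ) (h : a < k) : 2 * ddN k a ≤ k := by unfold ddN; omega

lemma ddN_cases (k a : ℕ) {e : ℤ} (h : ddN k a = e) :
    (a : ℤ) = e ∨ (k : ℤ) - (a : ℤ) = e := by
  unfold ddN at h; omega

lemma ddN_surj (k : ℕ) (hk : 3 ≤ k) {e : ℤ} (h0 : 0 ≤ e) (h2 : 2 * e ≤ k) :
    ∃ j : Fin k, ddN k (j : ℕ) = e := by
  refine ⟨⟨e.toNat, by omega⟩, ?_⟩
  show ddN k e.toNat = e
  unfold ddN
  omega

set_option maxHeartbeats 1000000 in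
lemma coreN (k a b p : ℕ) (hk : 3 ≤ k) (ha : a < k)
    (hb : b = if a = 0 then k - 1 else a - 1) (hp : p = if a = k - 1 then 0 else a + 1) :
    (DDN k a b - ddN k a ≤ 1 ∧ ddN k a - DDN k a b ≤ 1) ∧
    (DDN k a p - ddN k a ≤ 1 ∧ ddN k a - DDN k a p ≤ 1) ∧
    (DDN k a b - DDN k a p ≤ 1 ∧ DDN k a p - DDN k a b ≤ 1) ∧
    (DDN k a b ≠ ddN k a ∨ DDN k a p ≠ ddN k a) := by
  unfold DDN ddN
  split_ifs at hb hp ⊢ <;> omega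

lemma core (n : ℕ) (j : Fin (n + 3)) :
    (DDN (n+3) (j : ℕ) ((j - 1 : Fin (n+3)) : ℕ) - ddN (n+3) (j : ℕ) ≤ 1 ∧
      ddN (n+3) (j : ℕ) - DDN (n+3) (j : ℕ) ((j - 1 : Fin (n+3)) : ℕ) ≤ 1) ∧
    (DDN (n+3) (j : ℕ) ((j + 1 : Fin (n+3)) : ℕ) - ddN (n+3) (j : ℕ) ≤ 1 ∧
      ddN (n+3) (j : ℕ) - DDN (n+3) (j : ℕ) ((j + 1 : Fin (n+3)) : ℕ) ≤ 1) ∧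
    (DDN (n+3) (j : ℕ) ((j - 1 : Fin (n+3)) : ℕ)
        - DDN (n+3) (j : ℕ) ((j + 1 : Fin (n+3)) : ℕ) ≤ 1 ∧
      DDN (n+3) (j : ℕ) ((j + 1 : Fin (n+3)) : ℕ)
        - DDN (n+3) (j : ℕ) ((j - 1 : Fin (n+3)) : ℕ) ≤ 1) ∧
    (DDN (n+3) (j : ℕ) ((j - 1 : Fin (n+3)) : ℕ) ≠ ddN (n+3) (j : ℕ) ∨
      DDN (n+3) (j : ℕ) ((j + 1 : Fin (n+3)) : ℕ) ≠ ddN (n+3) (j : ℕ)) := by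
  have hm : ((j - 1 : Fin (n+3)) : ℕ) = if (j : ℕ) = 0 then n + 2 else (j : ℕ) - 1 := by
    rw [Fin.coe_sub_one]; simp only [Fin.ext_iff, Fin.val_zero]
  have hp : ((j + 1 : Fin (n+3)) : ℕ) = if (j : ℕ) = n + 2 then 0 else (j : ℕ) + 1 := by
    rw [Fin.val_add_one]; simp [Fin.ext_iff, Fin.last]
  exact coreN (n+3) (j : ℕ) _ _ (by omega) j.isLt (by rw [hm]; split_ifs <;> omega) (by rw [hp]; split_ifs <;> omega)

open Classical in
/-- The coloring of the corona product. -/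
noncomputable def col {V : Type*} (c : Sym2 V → ℤ) (av : V → ℤ) (k : ℕ) :
    Sym2 (V ⊕ V × Fin k) → ℤ :=
  Sym2.lift ⟨fun x y =>
    match x, y with
    | Sum.inl u, Sum.inl v => c s(u, v)
    | Sum.inl _, Sum.inr p => av p.1 - 1 - ddN k (p.2 : ℕ)
    | Sum.inr p, Sum.inl _ => av p.1 - 1 - ddN k (p.2 : ℕ)
    | Sum.inr p, Sum.inr q => (if p.1 = q.1 then av p.1 else 0) - 1 - DDN k (p.2 : ℕ) (q.2 : ℕ),
    by
      rintro (u | p) (v | q)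
      · show c s(u, v) = c s(v, u)
        rw [Sym2.eq_swap]
      · rfl
      · rfl
      · show (if p.1 = q.1 then av p.1 else 0) - 1 - DDN k _ _
            = (if q.1 = p.1 then av q.1 else 0) - 1 - DDN k _ _
        rw [DDN_symm]
        rcases eq_or_ne p.1 q.1 with h | h
        · rw [if_pos h, if_pos h.symm, h]
        · rw [if_neg h, if_neg h.symm]⟩

@[simp] lemma col_inl_inl {V : Type*} (c : Sym2 V → ℤ) (av : V → ℤ) (k : ℕ) (u v : V) :
    col c av k s(Sum.inl u, Sum.inl v) = c s(u, v) := Sym2.lift_mk _ _ _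

@[simp] lemma col_inl_inr {V : Type*} (c : Sym2 V → ℤ) (av : V → ℤ) (k : ℕ) (u : V)
    (p : V × Fin k) :
    col c av k s(Sum.inl u, Sum.inr p) = av p.1 - 1 - ddN k (p.2 : ℕ) := Sym2.lift_mk _ _ _

@[simp] lemma col_inr_inl {V : Type*} (c : Sym2 V → ℤ) (av : V → ℤ) (k : ℕ) (u : V)
    (p : V × Fin k) :
    col c av k s(Sum.inr p, Sum.inl u) = av p.1 - 1 - ddN k (p.2 : ℕ) := Sym2.lift_mk _ _ _

open Classical in
@[simp] lemma col_inr_inr {V : Type*} (c : Sym2 V → ℤ) (av : V → ℤ) (k : ℕ) (p q : V × Fin k) :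
    col c av k s(Sum.inr p, Sum.inr q)
      = (if p.1 = q.1 then av p.1 else 0) - 1 - DDN k (p.2 : ℕ) (q.2 : ℕ) := Sym2.lift_mk _ _ _

lemma ncard_le_two {α : Type*} {S : Set α} (x₁ x₂ : α) (h : ∀ y ∈ S, y = x₁ ∨ y = x₂) :
    S.ncard ≤ 2 := by
  have hsub : S ⊆ {x₁, x₂} := fun y hy => h y hy
  calc S.ncard ≤ ({x₁, x₂} : Set α).ncard := Set.ncard_le_ncard hsub (Set.toFinite _)
    _ ≤ 2 := by
        have h1 := Set.ncard_insert_le x₁ ({x₂} : Set α)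
        simpa using h1

end Stmt13Aux

open Stmt13Aux in
/-- For any graph `G` and any `k ≥ 3`, `μ_int(G ⊙ C_k) ≤ max {2, μ_int(G)}`. -/
theorem stmt13 {V : Type*} [Fintype V] (G : SimpleGraph V) (k : ℕ) (hk : 3 ≤ k) :
    impropriety (corona G (SimpleGraph.cycleGraph k)) ≤ max 2 (impropriety G) := by
  classical
  obtain ⟨n, rfl⟩ : ∃ n, k = n + 3 := ⟨k - 3, by omega⟩
  -- a coloring of G realizing the impropriety
  have hSne : {k : ℕ | ∃ c : Sym2 V → ℤ, IsIntervalColoring G c ∧ IsKImproper G c k}.Nonempty := by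
    refine ⟨Fintype.card V, fun _ => 0, ?_, ?_⟩
    · rintro v a b x ⟨u, hu, hua⟩ ⟨w, hw, hwb⟩ hax hxb
      refine ⟨u, hu, ?_⟩
      simp only at hua hwb ⊢
      omega
    · intro v q
      calc ({u : V | G.Adj v u ∧ (fun _ => (0:ℤ)) s(v, u) = q}).ncard
          ≤ (Set.univ : Set V).ncard := Set.ncard_le_ncard (Set.subset_univ _) Set.finite_univ
        _ = Fintype.card V := by rw [Set.ncard_univ, Nat.card_eq_fintype_card]
  obtain ⟨c, hcI, hcK⟩ := Nat.sInf_mem hSne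
  set m := impropriety G with hm
  -- base colors at each vertex of G
  have hav : ∀ v : V, ∃ a : ℤ, (∀ u, G.Adj v u → a ≤ c s(v, u)) ∧
      ((∃ u, G.Adj v u) → ∃ u, G.Adj v u ∧ c s(v, u) = a) := by
    intro v
    by_cases hne : ∃ u, G.Adj v u
    · obtain ⟨u0, hu0⟩ := hne
      have hFne : ((G.neighborFinset v).image (fun u => c s(v, u))).Nonempty :=
        ⟨c s(v, u0), Finset.mem_image_of_mem _ (by simpa using hu0)⟩
      refine ⟨((G.neighborFinset v).image (fun u => c s(v, u))).min' hFne,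
        fun u hu => Finset.min'_le _ _
        (Finset.mem_image_of_mem _ (by simpa using hu)), fun _ => ?_⟩
      obtain ⟨u, hu, he⟩ := Finset.mem_image.mp (Finset.min'_mem _ hFne)
      exact ⟨u, by simpa using hu, he⟩
    · exact ⟨1, fun u hu => absurd ⟨u, hu⟩ hne, fun h => absurd h hne⟩
  choose av hav1 hav2 using hav
  apply Nat.sInf_le
  refine ⟨col c av (n + 3), ?_, ?_⟩
  · -- interval property
    rintro (v | ⟨v, j⟩) α β x hα hβ hαx hxβ
    · -- vertex of G
      rcases le_or_gt (av v) x with hx | hx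
      · -- x at or above the base color: use the interval property of c
        obtain ⟨yβ, hyβ, hcβ⟩ := hβ
        obtain ⟨uβ, huβ, hcβ'⟩ : ∃ u, G.Adj v u ∧ c s(v, u) = β := by
          rcases yβ with uβ | ⟨w, i⟩
          · exact ⟨uβ, hyβ, by simpa using hcβ⟩
          · exfalso
            have hw : v = w := hyβ
            subst hw
            rw [col_inl_inr] at hcβ
            have hcβ2 : av v - 1 - ddN (n+3) (i : ℕ) = β := hcβ
            have h0 := ddN_nonneg (n+3) (i : ℕ) i.isLt
            omega
        obtain ⟨u0, hu0, hcu0⟩ := hav2 v ⟨uβ, huβ⟩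
        obtain ⟨u, hu, hcu⟩ := hcI v (av v) β x ⟨u0, hu0, hcu0⟩ ⟨uβ, huβ, hcβ'⟩ hx hxβ
        exact ⟨Sum.inl u, hu, by simpa using hcu⟩
      · -- x below the base color: use a pendant edge
        obtain ⟨yα, hyα, hcα⟩ := hα
        have hαpend : ∃ i : Fin (n+3), α = av v - 1 - ddN (n+3) (i : ℕ) := by
          rcases yα with uα | ⟨w, i⟩
          · exfalso
            have := hav1 v uα hyα
            rw [col_inl_inl] at hcα
            omega
          · have hw : v = w := hyα
            subst hw
            rw [col_inl_inr] at hcα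
            have hcα2 : av v - 1 - ddN (n+3) (i : ℕ) = α := hcα
            exact ⟨i, hcα2.symm⟩
        obtain ⟨iα, hiα⟩ := hαpend
        have h2 := two_ddN_le (n+3) (iα : ℕ) iα.isLt
        obtain ⟨i, hi⟩ := ddN_surj (n+3) (by omega) (e := av v - 1 - x)
          (by omega) (by omega)
        refine ⟨Sum.inr (v, i), rfl, ?_⟩
        rw [col_inl_inr]
        show av v - 1 - ddN (n+3) (i : ℕ) = x
        omega
    · -- vertex of a cycle copy
      have hcore := core n j
      have hchar : ∀ q : ℤ, (∃ y, (corona G (SimpleGraph.cycleGraph (n+3))).Adj (Sum.inr (v, j)) y ∧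
          col c av (n+3) s(Sum.inr (v, j), y) = q) →
          q = av v - 1 - ddN (n+3) (j : ℕ) ∨
          q = av v - 1 - DDN (n+3) (j : ℕ) ((j - 1 : Fin (n+3)) : ℕ) ∨
          q = av v - 1 - DDN (n+3) (j : ℕ) ((j + 1 : Fin (n+3)) : ℕ) := by
        rintro q ⟨y, hy, hcy⟩
        rcases y with u | ⟨w, i⟩
        · rw [col_inr_inl] at hcy
          have hcy2 : av v - 1 - ddN (n+3) (j : ℕ) = q := hcy
          exact Or.inl hcy2.symm
        · have hy' : v = w ∧ (SimpleGraph.cycleGraph (n+3)).Adj j i := hy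
          obtain ⟨hw, hadj⟩ := hy'
          subst hw
          rw [col_inr_inr] at hcy
          have hcy2 : av v - 1 - DDN (n+3) (j : ℕ) (i : ℕ) = q := by
            rw [if_pos rfl] at hcy; exact hcy
          have hadj' : j - i = 1 ∨ i - j = 1 :=
            (SimpleGraph.cycleGraph_adj (n := n + 1)).mp hadj
          rcases hadj' with h3 | h3
          · have hij : i = j - 1 := by rw [← h3]; abel
            subst hij
            exact Or.inr (Or.inl hcy2.symm)
          · have hij : i = j + 1 := by rw [← h3]; abel
            subst hij
            exact Or.inr (Or.inr hcy2.symm)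
      have hA := hchar α hα
      have hB := hchar β hβ
      have hxab : x = α ∨ x = β := by omega
      rcases hxab with h | h
      · subst h; exact hα
      · subst h; exact hβ
  · -- impropriety bound
    rintro (v | ⟨v, j⟩) q
    · rcases le_or_gt (av v) q with hq | hq
      · -- only G-edges can have this color
        calc ({y | (corona G (SimpleGraph.cycleGraph (n+3))).Adj (Sum.inl v) y ∧
              col c av (n+3) s(Sum.inl v, y) = q}).ncard
            ≤ (Sum.inl '' {u : V | G.Adj v u ∧ c s(v, u) = q} :
                Set (V ⊕ V × Fin (n+3))).ncard := by
              apply Set.ncard_le_ncard _ (Set.toFinite _)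
              rintro y ⟨hy, hcy⟩
              rcases y with u | ⟨w, i⟩
              · exact ⟨u, ⟨hy, by simpa using hcy⟩, rfl⟩
              · exfalso
                have hw : v = w := hy
                subst hw
                rw [col_inl_inr] at hcy
                have hcy2 : av v - 1 - ddN (n+3) (i : ℕ) = q := hcy
                have h0 := ddN_nonneg (n+3) (i : ℕ) i.isLt
                omega
          _ = ({u : V | G.Adj v u ∧ c s(v, u) = q}).ncard :=
              Set.ncard_image_of_injective _ Sum.inl_injective
          _ ≤ m := hcK v q
          _ ≤ max 2 m := le_max_right _ _
      · -- only pendant edges can have this color; at most two of them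
        set e : ℤ := av v - 1 - q with he
        refine le_trans (ncard_le_two
          (Sum.inr (v, (⟨min e.toNat (n+2), by omega⟩ : Fin (n+3))))
          (Sum.inr (v, (⟨min (n+3 - e.toNat) (n+2), by omega⟩ : Fin (n+3)))) ?_)
          (le_max_left _ _)
        rintro y ⟨hy, hcy⟩
        rcases y with u | ⟨w, i⟩
        · exfalso
          have := hav1 v u hy
          rw [col_inl_inl] at hcy
          omega
        · have hw : v = w := hy
          subst hw
          rw [col_inl_inr] at hcy
          have hcy2 : av v - 1 - ddN (n+3) (i : ℕ) = q := hcy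
          have hdd : ddN (n+3) (i : ℕ) = e := by omega
          have hlt := i.isLt
          rcases ddN_cases _ _ hdd with h1 | h1
          · left
            have : i = (⟨min e.toNat (n+2), by omega⟩ : Fin (n+3)) := Fin.ext (by simp; omega)
            rw [this]
          · right
            have : i = (⟨min (n+3 - e.toNat) (n+2), by omega⟩ : Fin (n+3)) :=
              Fin.ext (by simp; omega)
            rw [this]
    · -- cycle vertex: at most 3 neighbors, not all of the same color
      have hcore := core n j
      have hchar : ∀ y ∈ {y | (corona G (SimpleGraph.cycleGraph (n+3))).Adj (Sum.inr (v, j)) y ∧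
          col c av (n+3) s(Sum.inr (v, j), y) = q},
          (y = Sum.inl v ∧ av v - 1 - ddN (n+3) (j : ℕ) = q) ∨
          (y = Sum.inr (v, j - 1) ∧
            av v - 1 - DDN (n+3) (j : ℕ) ((j - 1 : Fin (n+3)) : ℕ) = q) ∨
          (y = Sum.inr (v, j + 1) ∧
            av v - 1 - DDN (n+3) (j : ℕ) ((j + 1 : Fin (n+3)) : ℕ) = q) := by
        rintro y ⟨hy, hcy⟩
        rcases y with u | ⟨w, i⟩
        · rw [col_inr_inl] at hcy
          have hcy2 : av v - 1 - ddN (n+3) (j : ℕ) = q := hcy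
          have hu : u = v := hy
          exact Or.inl ⟨by rw [hu], hcy2⟩
        · have hy' : v = w ∧ (SimpleGraph.cycleGraph (n+3)).Adj j i := hy
          obtain ⟨hw, hadj⟩ := hy'
          subst hw
          rw [col_inr_inr] at hcy
          have hcy2 : av v - 1 - DDN (n+3) (j : ℕ) (i : ℕ) = q := by
            rw [if_pos rfl] at hcy; exact hcy
          have hadj' : j - i = 1 ∨ i - j = 1 :=
            (SimpleGraph.cycleGraph_adj (n := n + 1)).mp hadj
          rcases hadj' with h3 | h3
          · have hij : i = j - 1 := by rw [← h3]; abel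
            subst hij
            exact Or.inr (Or.inl ⟨rfl, hcy2⟩)
          · have hij : i = j + 1 := by rw [← h3]; abel
            subst hij
            exact Or.inr (Or.inr ⟨rfl, hcy2⟩)
      refine le_trans ?_ (le_max_left _ _)
      rcases hcore.2.2.2 with hne | hne
      · -- the (j-1)-edge color differs from the pendant color
        by_cases hqp : av v - 1 - ddN (n+3) (j : ℕ) = q
        · refine ncard_le_two (Sum.inl v) (Sum.inr (v, j + 1)) ?_
          intro y hy
          rcases hchar y hy with ⟨h, _⟩ | ⟨h, hc⟩ | ⟨h, _⟩
          · exact Or.inl h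
          · exfalso; omega
          · exact Or.inr h
        · refine ncard_le_two (Sum.inr (v, j - 1)) (Sum.inr (v, j + 1)) ?_
          intro y hy
          rcases hchar y hy with ⟨h, hc⟩ | ⟨h, _⟩ | ⟨h, _⟩
          · exact absurd hc hqp
          · exact Or.inl h
          · exact Or.inr h
      · by_cases hqp : av v - 1 - ddN (n+3) (j : ℕ) = q
        · refine ncard_le_two (Sum.inl v) (Sum.inr (v, j - 1)) ?_
          intro y hy
          rcases hchar y hy with ⟨h, _⟩ | ⟨h, _⟩ | ⟨h, hc⟩
          · exact Or.inl h
          · exact Or.inr h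
          · exfalso; omega
        · refine ncard_le_two (Sum.inr (v, j - 1)) (Sum.inr (v, j + 1)) ?_
          intro y hy
          rcases hchar y hy with ⟨h, hc⟩ | ⟨h, _⟩ | ⟨h, _⟩
          · exact absurd hc hqp
          · exact Or.inl h
          · exact Or.inr h
end

section
/- For any graphs G and H, μ_int(G ⊙ H) ≤ max{μ_int(G), |V(H)|}. -/
/-- For any graphs `G` and `H`, `μ_int(G ⊙ H) ≤ max {μ_int(G), |V(H)|}`. -/
theorem stmt17 {V W : Type*} [Fintype V] [Fintype W]
    (G : SimpleGraph V) (H : SimpleGraph W) :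
    impropriety (corona G H) ≤ max (impropriety G) (Fintype.card W) := by
  classical
  -- the defining set for `impropriety G` is nonempty
  have hS : {k : ℕ | ∃ c : Sym2 V → ℤ, IsIntervalColoring G c ∧ IsKImproper G c k}.Nonempty := by
    refine ⟨Fintype.card V, fun _ => 0, ?_, ?_⟩
    · rintro v a b x ⟨u, hu, ha⟩ ⟨u', hu', hb⟩ hax hxb
      exact ⟨u, hu, by simp at ha hb ⊢; omega⟩
    · intro v q
      calc ({u : V | G.Adj v u ∧ (fun _ => (0:ℤ)) s(v, u) = q}).ncard
          ≤ (Set.univ : Set V).ncard :=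
            Set.ncard_le_ncard (Set.subset_univ _) Set.finite_univ
        _ = Fintype.card V := by rw [Set.ncard_univ]; simp
  obtain ⟨c, hci, hck⟩ : ∃ c : Sym2 V → ℤ,
      IsIntervalColoring G c ∧ IsKImproper G c (impropriety G) := Nat.sInf_mem hS
  -- maximum color at a vertex of G
  set M : V → ℤ := fun v => if h : (G.neighborFinset v).Nonempty
    then (G.neighborFinset v).sup' h (fun u => c s(v, u)) else 0 with hMdef
  have hMle : ∀ v u, G.Adj v u → c s(v, u) ≤ M v := by
    intro v u h
    have hmem : u ∈ G.neighborFinset v := (SimpleGraph.mem_neighborFinset G v u).2 h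
    have hne : (G.neighborFinset v).Nonempty := ⟨u, hmem⟩
    simp only [hMdef, dif_pos hne]
    exact Finset.le_sup' (fun u => c s(v, u)) hmem
  have hMex : ∀ v u0, G.Adj v u0 → ∃ u, G.Adj v u ∧ c s(v, u) = M v := by
    intro v u0 h
    have hmem : u0 ∈ G.neighborFinset v := (SimpleGraph.mem_neighborFinset G v u0).2 h
    have hne : (G.neighborFinset v).Nonempty := ⟨u0, hmem⟩
    obtain ⟨u, hu, he⟩ := Finset.exists_mem_eq_sup' hne (fun u => c s(v, u))
    refine ⟨u, (SimpleGraph.mem_neighborFinset G v u).1 hu, ?_⟩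
    simp only [hMdef, dif_pos hne]
    exact he.symm
  -- the coloring of the corona
  let f : V ⊕ V × W → V ⊕ V × W → ℤ := fun x y =>
    match x, y with
    | Sum.inl u, Sum.inl v => c s(u, v)
    | Sum.inl _, Sum.inr p => M p.1 + 1
    | Sum.inr p, Sum.inl _ => M p.1 + 1
    | Sum.inr p, Sum.inr q => max (M p.1) (M q.1) + 1
  have hfs : ∀ x y, f x y = f y x := by
    rintro (u | p) (v | q) <;> simp [f, Sym2.eq_swap, max_comm]
  let c' : Sym2 (V ⊕ V × W) → ℤ := Sym2.lift ⟨f, hfs⟩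
  have hc' : ∀ x y, c' s(x, y) = f x y := fun x y => rfl
  -- every edge at a copy-vertex `p` has color `M p.1 + 1`
  have hkey : ∀ (p : V × W) (y), (corona G H).Adj (Sum.inr p) y →
      c' s(Sum.inr p, y) = M p.1 + 1 := by
    rintro p (u | q) h
    · simp [hc', f]
    · have h1 : p.1 = q.1 := h.1
      simp [hc', f, h1]
  have hIC : IsIntervalColoring (corona G H) c' := by
    rintro (v | p) a b x ha hb hax hxb
    · obtain ⟨ua, hadja, hca⟩ := ha
      obtain ⟨ub, hadjb, hcb⟩ := hb
      by_cases hx : x = M v + 1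
      · -- then b ≥ M v + 1, so the `b`-edge must go into the copy
        rcases ub with u | q
        · exfalso
          have h1 : c s(v, u) = b := by rw [hc'] at hcb; exact hcb
          have := hMle v u hadjb
          omega
        · have hq1 : v = q.1 := hadjb
          have hcolb : c' s(Sum.inl v, Sum.inr q) = M v + 1 := by
            simp [hc', f, ← hq1]
          exact ⟨Sum.inr q, hadjb, by rw [hcolb, hx]⟩
      · -- x ≤ M v, and the `a`-edge must be a G-edge
        have hb' : b ≤ M v + 1 := by
          rcases ub with u | q
          · have h1 : c s(v, u) = b := by rw [hc'] at hcb; exact hcb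
            have := hMle v u hadjb; omega
          · have hq1 : v = q.1 := hadjb
            have : c' s(Sum.inl v, Sum.inr q) = M v + 1 := by
              simp [hc', f, ← hq1]
            omega
        have hxM : x ≤ M v := by omega
        rcases ua with u | q
        · have h1 : c s(v, u) = a := by rw [hc'] at hca; exact hca
          obtain ⟨u', hadj', hc'eq⟩ :=
            hci v a (M v) x ⟨u, hadja, h1⟩ (hMex v u hadja) hax hxM
          exact ⟨Sum.inl u', hadj', by rw [hc']; exact hc'eq⟩
        · exfalso
          have hq1 : v = q.1 := hadja
          have : c' s(Sum.inl v, Sum.inr q) = M v + 1 := by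
            simp [hc', f, ← hq1]
          omega
    · obtain ⟨ua, hadja, hca⟩ := ha
      obtain ⟨ub, hadjb, hcb⟩ := hb
      have h1 := hkey p ua hadja
      have h2 := hkey p ub hadjb
      have : x = M p.1 + 1 := by omega
      exact ⟨ua, hadja, by rw [h1, this]⟩
  have hKI : IsKImproper (corona G H) c' (max (impropriety G) (Fintype.card W)) := by
    rintro (v | p) q
    · by_cases hq : q = M v + 1
      · -- such edges all go into the copy of H at v
        have hsub : {y | (corona G H).Adj (Sum.inl v) y ∧ c' s(Sum.inl v, y) = q}
            ⊆ (fun w => (Sum.inr (v, w) : V ⊕ V × W)) '' Set.univ := by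
          rintro (u | r) ⟨hadj, hcq⟩
          · exfalso
            have h1 : c s(v, u) = q := by rw [hc'] at hcq; exact hcq
            have := hMle v u hadj
            omega
          · have hr1 : v = r.1 := hadj
            exact ⟨r.2, trivial, by rw [hr1]⟩
        calc ({y | (corona G H).Adj (Sum.inl v) y ∧ c' s(Sum.inl v, y) = q}).ncard
            ≤ ((fun w => (Sum.inr (v, w) : V ⊕ V × W)) '' Set.univ).ncard :=
              Set.ncard_le_ncard hsub (Set.toFinite _)
          _ = (Set.univ : Set W).ncard := by
              apply Set.ncard_image_of_injective
              intro a b hab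
              simpa using hab
          _ = Fintype.card W := by rw [Set.ncard_univ]; simp
          _ ≤ max (impropriety G) (Fintype.card W) := le_max_right _ _
      · -- such edges stay inside G
        have hsub : {y | (corona G H).Adj (Sum.inl v) y ∧ c' s(Sum.inl v, y) = q}
            ⊆ Sum.inl '' {u : V | G.Adj v u ∧ c s(v, u) = q} := by
          rintro (u | r) ⟨hadj, hcq⟩
          · exact ⟨u, ⟨hadj, by rw [hc'] at hcq; exact hcq⟩, rfl⟩
          · exfalso
            have hr1 : v = r.1 := hadj
            have : c' s(Sum.inl v, Sum.inr r) = M v + 1 := by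
              simp [hc', f, ← hr1]
            exact hq (by omega)
        calc ({y | (corona G H).Adj (Sum.inl v) y ∧ c' s(Sum.inl v, y) = q}).ncard
            ≤ (Sum.inl '' {u : V | G.Adj v u ∧ c s(v, u) = q}).ncard :=
              Set.ncard_le_ncard hsub (Set.toFinite _)
          _ = ({u : V | G.Adj v u ∧ c s(v, u) = q}).ncard :=
              Set.ncard_image_of_injective _ Sum.inl_injective
          _ ≤ impropriety G := hck v q
          _ ≤ max (impropriety G) (Fintype.card W) := le_max_left _ _
    · -- a copy-vertex has at most |W| neighbors in total
      set S := {y | (corona G H).Adj (Sum.inr p) y ∧ c' s(Sum.inr p, y) = q} with hSdef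
      let φ : V ⊕ V × W → W := fun x => match x with
        | Sum.inl _ => p.2
        | Sum.inr r => r.2
      have hinj : Set.InjOn φ S := by
        rintro (u | r) hx (u' | r') hy hφ
        · have h1 : u = p.1 := hx.1
          have h2 : u' = p.1 := hy.1
          rw [h1, h2]
        · exfalso
          have hadj : p.1 = r'.1 ∧ H.Adj p.2 r'.2 := hy.1
          have : p.2 = r'.2 := hφ
          exact H.irrefl (v := p.2) (this ▸ hadj.2)
        · exfalso
          have hadj : p.1 = r.1 ∧ H.Adj p.2 r.2 := hx.1
          have : r.2 = p.2 := hφ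
          exact H.irrefl (v := p.2) (this ▸ hadj.2)
        · have hadj : p.1 = r.1 ∧ H.Adj p.2 r.2 := hx.1
          have hadj' : p.1 = r'.1 ∧ H.Adj p.2 r'.2 := hy.1
          have h2 : r.2 = r'.2 := hφ
          have h1 : r.1 = r'.1 := by rw [← hadj.1, hadj'.1]
          exact congrArg Sum.inr (Prod.ext h1 h2)
      calc S.ncard = (φ '' S).ncard := (Set.ncard_image_of_injOn hinj).symm
        _ ≤ (Set.univ : Set W).ncard :=
            Set.ncard_le_ncard (Set.subset_univ _) Set.finite_univ
        _ = Fintype.card W := by rw [Set.ncard_univ]; simp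
        _ ≤ max (impropriety G) (Fintype.card W) := le_max_right _ _
  exact Nat.sInf_le ⟨c', hIC, hKI⟩
end
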